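/- If Ψ(G) is a greedoid and C is an induced cycle of G of length k ≥ 4, then no maximum stable set of C is a local maximum stable set of G; i.e., Ω(C_k) ∩ Ψ(G) = ∅. -/

import Mathlib

open Finset

variable {V : Type*}

/-- A stable (independent) set of vertices. -/
def StableSet (G : SimpleGraph V) (S : Finset V) : Prop :=
  ∀ x ∈ S, ∀ y ∈ S, ¬ G.Adj x y

/-- The closed neighborhood N[S] of a finite vertex set. -/
def closedNbhd [Fintype V] [DecidableEq V] (G : SimpleGraph V) [DecidableRel G.Adj]
    (S : Finset V) : Finset V :=
  S ∪ Finset.univ.filter (fun v => ∃ s ∈ S, G.Adj v s)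

/-- Ψ(G): the family of local maximum stable sets of `G`:
stable sets `S` that are maximum stable sets of the subgraph induced by `N[S]`. -/
def Psi [Fintype V] [DecidableEq V] (G : SimpleGraph V) [DecidableRel G.Adj] :
    Set (Finset V) :=
  {S | StableSet G S ∧
    ∀ T : Finset V, T ⊆ closedNbhd G S → StableSet G T → T.card ≤ S.card}

/-- A maximum stable set of `G`. -/
def MaximumStable (G : SimpleGraph V) (S : Finset V) : Prop :=
  StableSet G S ∧ ∀ T : Finset V, StableSet G T → T.card ≤ S.card

/-- The accessibility property of a set system. -/
def Accessible [DecidableEq V] (F : Set (Finset V)) : Prop :=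
  ∀ X ∈ F, X.Nonempty → ∃ x ∈ X, X.erase x ∈ F

/-- The exchange property of a set system. -/
def ExchangeProp [DecidableEq V] (F : Set (Finset V)) : Prop :=
  ∀ X ∈ F, ∀ Y ∈ F, X.card = Y.card + 1 → ∃ x ∈ X, x ∉ Y ∧ insert x Y ∈ F

/-- A greedoid: a nonempty set system satisfying accessibility and exchange. -/
def IsGreedoid [DecidableEq V] (F : Set (Finset V)) : Prop :=
  F.Nonempty ∧ Accessible F ∧ ExchangeProp F

/-- An accessibility chain for `S`: sets `f 1 ⊆ f 2 ⊆ ... ⊆ f |S| = S`,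
with `|f j| = j` and each `f j ∈ Ψ(G)`. -/
def HasAccessChain [Fintype V] [DecidableEq V] (G : SimpleGraph V) [DecidableRel G.Adj]
    (S : Finset V) : Prop :=
  ∃ f : ℕ → Finset V, f S.card = S ∧
    (∀ j, 1 ≤ j → j ≤ S.card → (f j).card = j ∧ f j ∈ Psi G) ∧
    (∀ j, 1 ≤ j → j < S.card → f j ⊆ f (j + 1))

/-- A matching `M` is uniquely restricted if it is the unique perfect matching of the
subgraph induced by the set of vertices it saturates. -/
def UniquelyRestricted (G : SimpleGraph V) (M : G.Subgraph) : Prop :=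
  M.IsMatching ∧ ∀ M' : G.Subgraph, M'.IsMatching → M'.support = M.support →
    M'.edgeSet = M.edgeSet

/-- A maximum matching: a matching of maximum cardinality. -/
def MaximumMatching (G : SimpleGraph V) (M : G.Subgraph) : Prop :=
  M.IsMatching ∧ ∀ M' : G.Subgraph, M'.IsMatching → M'.edgeSet.ncard ≤ M.edgeSet.ncard

/-- A cycle `c` is alternating with respect to the matching `M` if of any two incident
edges of `c` exactly one belongs to `M`. -/
def AlternatingCycle (G : SimpleGraph V) (M : G.Subgraph) {v : V} (c : G.Walk v v) : Prop :=
  c.IsCycle ∧ ∀ i : Fin c.edges.length,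
    (c.edges.get i ∈ M.edgeSet ↔
      c.edges.get ⟨(i.1 + 1) % c.edges.length,
        Nat.mod_lt _ (lt_of_le_of_lt (Nat.zero_le _) i.2)⟩ ∉ M.edgeSet)

/-- A unicyclic graph: it has a cycle, and all of its cycles have the same edge set. -/
def Unicyclic [DecidableEq V] (G : SimpleGraph V) : Prop :=
  (∃ (v : V) (c : G.Walk v v), c.IsCycle) ∧
  ∀ ⦃v : V⦄ (c : G.Walk v v) ⦃w : V⦄ (d : G.Walk w w), c.IsCycle → d.IsCycle →
    c.edges.toFinset = d.edges.toFinset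

/-- The stability number α(G). -/
noncomputable def alphaNum (G : SimpleGraph V) : ℕ :=
  sSup {n | ∃ S : Finset V, StableSet G S ∧ S.card = n}

/-- The matching number μ(G). -/
noncomputable def muNum (G : SimpleGraph V) : ℕ :=
  sSup {n | ∃ M : G.Subgraph, M.IsMatching ∧ M.edgeSet.ncard = n}

/-- A König–Egerváry graph: α(G) + μ(G) = |V(G)|. -/
def KonigEgervary (G : SimpleGraph V) [Fintype V] : Prop :=
  alphaNum G + muNum G = Fintype.card V

section AuxLemmas

variable {V : Type*}

/-- In a path from `u` to `w`, if the edge `s(u,w)` occurs, the path has length 1. -/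
lemma aux_path_edge_ends {G : SimpleGraph V} {u w : V} (p : G.Walk u w)
    (hp : p.IsPath) (he : s(u, w) ∈ p.edges) : p.length = 1 := by
  cases p with
  | nil => simp at he
  | @cons _ y _ h p' =>
    rw [SimpleGraph.Walk.edges_cons, List.mem_cons] at he
    rcases he with he | he
    · have hwy : w = y := by
        rw [Sym2.eq_iff] at he
        rcases he with ⟨_, h2⟩ | ⟨h1, _⟩
        · exact h2
        · exact absurd h1 h.ne
      subst hwy
      have hnil : p' = SimpleGraph.Walk.nil :=
        SimpleGraph.Walk.isPath_iff_eq_nil.mp hp.of_cons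
      subst hnil
      simp
    · have hmem := SimpleGraph.Walk.fst_mem_support_of_mem_edges p' he
      exact absurd hmem ((SimpleGraph.Walk.cons_isPath_iff _ _).mp hp).2

/-- In a cycle of length ≥ 4 based at `x`, the two neighbors of `x` on the cycle are
distinct and not joined by a cycle edge. -/
lemma aux_cycle_start_neighbors {G : SimpleGraph V} {x : V} (c : G.Walk x x)
    (hc : c.IsCycle) (hlen : 4 ≤ c.length) :
    ∃ a b : V, a ≠ b ∧ s(x, a) ∈ c.edges ∧ s(x, b) ∈ c.edges ∧ s(a, b) ∉ c.edges := by
  cases c with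
  | nil => simp at hlen
  | @cons _ a _ hxa p =>
    rw [SimpleGraph.Walk.cons_isCycle_iff] at hc
    obtain ⟨hp, hno⟩ := hc
    rw [SimpleGraph.Walk.length_cons] at hlen
    have hplen : 3 ≤ p.length := by omega
    obtain ⟨b, hxb, r, hq⟩ := SimpleGraph.Walk.exists_eq_cons_of_ne hxa.ne p.reverse
    have hqpath : p.reverse.IsPath := hp.reverse
    have hrlen : r.length + 1 = p.length := by
      have h1 := SimpleGraph.Walk.length_reverse p
      rw [hq, SimpleGraph.Walk.length_cons] at h1
      omega
    rw [hq, SimpleGraph.Walk.cons_isPath_iff] at hqpath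
    obtain ⟨hrpath, hxr⟩ := hqpath
    have hab : a ≠ b := by
      rintro rfl
      have : r = SimpleGraph.Walk.nil := SimpleGraph.Walk.isPath_iff_eq_nil.mp hrpath
      rw [this] at hrlen
      simp at hrlen
      omega
    have hexb : s(x, b) ∈ p.edges := by
      have : s(x, b) ∈ p.reverse.edges := by rw [hq]; simp
      rwa [SimpleGraph.Walk.edges_reverse, List.mem_reverse] at this
    refine ⟨a, b, hab, by simp, List.mem_cons_of_mem _ hexb, ?_⟩
    intro habe
    rw [SimpleGraph.Walk.edges_cons, List.mem_cons] at habe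
    rcases habe with habe | habe
    · rw [Sym2.eq_iff] at habe
      rcases habe with ⟨h1, _⟩ | ⟨_, h2⟩
      · exact hxa.ne h1.symm
      · exact hxb.ne h2.symm
    · have : s(a, b) ∈ p.reverse.edges := by
        rwa [SimpleGraph.Walk.edges_reverse, List.mem_reverse]
      rw [hq, SimpleGraph.Walk.edges_cons, List.mem_cons] at this
      rcases this with habe' | habe'
      · rw [Sym2.eq_iff] at habe'
        rcases habe' with ⟨h1, _⟩ | ⟨_, h2⟩
        · exact hxa.ne h1.symm
        · exact hxb.ne h2.symm
      · have hrev : s(a, b) ∈ r.reverse.edges := by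
          rwa [SimpleGraph.Walk.edges_reverse, List.mem_reverse]
        have h1 : r.reverse.length = 1 :=
          aux_path_edge_ends r.reverse hrpath.reverse hrev
        rw [SimpleGraph.Walk.length_reverse] at h1
        omega

/-- Any vertex on a cycle of length ≥ 4 has two distinct neighbors on the cycle that
are not joined by a cycle edge. -/
lemma aux_cycle_neighbors [DecidableEq V] {G : SimpleGraph V} {v x : V} (c : G.Walk v v)
    (hc : c.IsCycle) (hlen : 4 ≤ c.length) (hx : x ∈ c.support) :
    ∃ a b : V, a ≠ b ∧ G.Adj x a ∧ G.Adj x b ∧ a ∈ c.support ∧ b ∈ c.support ∧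
      s(a, b) ∉ c.edges := by
  have hrot := SimpleGraph.Walk.rotate_edges c x hx
  have hlen' : 4 ≤ (c.rotate x hx).length := by
    have h1 := SimpleGraph.Walk.length_edges (c.rotate x hx)
    have h2 := SimpleGraph.Walk.length_edges c
    have h3 := hrot.perm.length_eq
    omega
  obtain ⟨a, b, hab, hea, heb, hn⟩ :=
    aux_cycle_start_neighbors (c.rotate x hx) (hc.rotate hx) hlen'
  have hea' : s(x, a) ∈ c.edges := hrot.mem_iff.mp hea
  have heb' : s(x, b) ∈ c.edges := hrot.mem_iff.mp heb
  exact ⟨a, b, hab, SimpleGraph.Walk.adj_of_mem_edges c hea',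
    SimpleGraph.Walk.adj_of_mem_edges c heb',
    SimpleGraph.Walk.snd_mem_support_of_mem_edges c hea',
    SimpleGraph.Walk.snd_mem_support_of_mem_edges c heb',
    fun h => hn (hrot.mem_iff.mpr h)⟩

/-- If `Ψ(G)` is accessible, every nonempty member of `Ψ(G)` contains a vertex whose
singleton is in `Ψ(G)`. -/
lemma aux_psi_singleton [Fintype V] [DecidableEq V] (G : SimpleGraph V) [DecidableRel G.Adj]
    (hacc : Accessible (Psi G)) :
    ∀ (n : ℕ) (S : Finset V), S.card = n → S ∈ Psi G → S.Nonempty →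
      ∃ x ∈ S, ({x} : Finset V) ∈ Psi G := by
  intro n
  induction n using Nat.strong_induction_on with
  | _ n ih =>
    intro S hcard hS hne
    rcases Nat.lt_or_ge 1 n with h | h
    · obtain ⟨x, hx, hxS⟩ := hacc S hS hne
      have hcard' : (S.erase x).card = n - 1 := by
        rw [Finset.card_erase_of_mem hx, hcard]
      have hne' : (S.erase x).Nonempty := Finset.card_pos.mp (by omega)
      obtain ⟨y, hy, hyP⟩ := ih (n - 1) (by omega) _ hcard' hxS hne'
      exact ⟨y, Finset.mem_of_mem_erase hy, hyP⟩
    · have h1 : S.card = 1 := by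
        have := Finset.card_pos.mpr hne
        omega
      obtain ⟨x, rfl⟩ := Finset.card_eq_one.mp h1
      exact ⟨x, Finset.mem_singleton_self x, hS⟩

end AuxLemmas

/-- If Ψ(G) is a greedoid and `c` is an induced cycle of length ≥ 4, then no maximum
stable set of the cycle is a local maximum stable set of `G`. -/
theorem no_cycle_max_stable_in_psi [Fintype V] [DecidableEq V] (G : SimpleGraph V)
    [DecidableRel G.Adj] (hG : IsGreedoid (Psi G)) {v : V} (c : G.Walk v v)
    (hc : c.IsCycle) (hlen : 4 ≤ c.length)
    (hind : ∀ x ∈ c.support, ∀ y ∈ c.support, G.Adj x y → s(x, y) ∈ c.edges)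
    (S : Finset V) (hSsub : S ⊆ c.support.toFinset) (hSst : StableSet G S)
    (hSmax : ∀ T : Finset V, T ⊆ c.support.toFinset → StableSet G T → T.card ≤ S.card) :
    S ∉ Psi G := by
  intro hS
  -- S is nonempty
  have hv1 : ({v} : Finset V) ⊆ c.support.toFinset := by
    intro t ht
    rw [Finset.mem_singleton] at ht
    subst ht
    exact List.mem_toFinset.mpr c.start_mem_support
  have hst1 : StableSet G {v} := by
    intro p hp q hq
    rw [Finset.mem_singleton] at hp hq
    subst hp; subst hq
    exact G.irrefl
  have hpos : 1 ≤ S.card := by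
    have := hSmax {v} hv1 hst1
    simpa using this
  have hne : S.Nonempty := Finset.card_pos.mp hpos
  obtain ⟨x, hxS, hxPsi⟩ := aux_psi_singleton G hG.2.1 S.card S rfl hS hne
  have hx : x ∈ c.support := List.mem_toFinset.mp (hSsub hxS)
  obtain ⟨a, b, hab, hxa, hxb, ha, hb, hn⟩ := aux_cycle_neighbors c hc hlen hx
  have hnab : ¬ G.Adj a b := fun h => hn (hind a ha b hb h)
  have hsub : ({a, b} : Finset V) ⊆ closedNbhd G {x} := by
    intro t ht
    rw [Finset.mem_insert, Finset.mem_singleton] at ht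
    unfold closedNbhd
    rw [Finset.mem_union, Finset.mem_filter]
    rcases ht with rfl | rfl
    · exact Or.inr ⟨Finset.mem_univ _, x, Finset.mem_singleton_self x, hxa.symm⟩
    · exact Or.inr ⟨Finset.mem_univ _, x, Finset.mem_singleton_self x, hxb.symm⟩
  have hstab : StableSet G {a, b} := by
    intro p hp q hq
    rw [Finset.mem_insert, Finset.mem_singleton] at hp hq
    rcases hp with rfl | rfl <;> rcases hq with rfl | rfl
    · exact G.irrefl
    · exact hnab
    · exact fun h => hnab h.symm
    · exact G.irrefl
  have hcard : ({a, b} : Finset V).card = 2 := by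
    rw [Finset.card_insert_of_notMem (by simpa using hab), Finset.card_singleton]
  have hle := hxPsi.2 {a, b} hsub hstab
  rw [hcard, Finset.card_singleton] at hle
  omega
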